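/- Let X be a real Hilbert space and G a group of linear isometric bijections of X. Let E, C : X → ℝ be continuous, G-invariant, with E(0) = C(0) = 0, both satisfying the splitting property, and with E coercive: E(u) > 0 for every u ≠ 0, E(u_n) → ∞ whenever ‖u_n‖ → ∞, and ‖u_n‖ → 0 whenever E(u_n) → 0. Assume the hylomorphy condition inf{Λ(u) : u ∈ X, C(u) ≠ 0} < Λ₀. Let γ : ℝ → X → X be a family of maps that preserves E and C (E(γ_t u) = E(u) and C(γ_t u) = C(u) for all t, u). Then for every δ ∈ (0, δ_∞) there exist e_δ > 0 and c_δ > 0 such that the set Γ(e_δ, c_δ) = {u ∈ X : E(u) = e_δ and |C(u)| = c_δ} is nonempty, does not contain 0, is invariant under γ, is G-compact, consists of minimizers of E on {u : |C(u)| = c_δ}, and is stable: for every ε > 0 there exists η > 0 such that d(u, Γ(e_δ, c_δ)) ≤ η implies d(γ_t u, Γ(e_δ, c_δ)) ≤ ε for all t ≥ 0, where d is the metric induced by the norm of X. -/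

import Mathlib

open Filter Topology

variable {X : Type*} [NormedAddCommGroup X] [InnerProductSpace ℝ X]

/-- A sequence in a real inner ℝ product space converges weakly to `0`. -/
def WeakNullSeq (w : ℕ → X) : Prop :=
  ∀ v : X, Tendsto (fun n => (inner ℝ v (w n) : ℝ)) atTop (𝓝 0)

/-- A functional `F : X → ℝ` has the splitting property. -/
def SplittingProperty (F : X → ℝ) : Prop :=
  ∀ (u : X) (w : ℕ → X), WeakNullSeq w →
    Tendsto (fun n => F (u + w n) - F u - F (w n)) atTop (𝓝 0)

/-- The hylenic ratio `Λ(u) = E(u)/|C(u)|`. -/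
noncomputable def hylenicRatio (E C : X → ℝ) (u : X) : ℝ := E u / |C u|

/-- A sequence `(u n)` is `G`-vanishing: it is norm-bounded and for every
subsequence `(u (φ k))` and every sequence `(g k)` in `G`, `g k (u (φ k))`
converges weakly to `0`. -/
def GVanishing (G : Subgroup (X ≃ₗᵢ[ℝ] X)) (u : ℕ → X) : Prop :=
  (∃ M : ℝ, ∀ n, ‖u n‖ ≤ M) ∧
  ∀ φ : ℕ → ℕ, StrictMono φ → ∀ g : ℕ → G,
    WeakNullSeq (fun k => (g k : X ≃ₗᵢ[ℝ] X) (u (φ k)))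

/-- `Λ₀`: the infimum of `liminf Λ(u n)` over all `G`-vanishing sequences
with `C (u n) ≠ 0` for all `n`. -/
noncomputable def Lambda0 (G : Subgroup (X ≃ₗᵢ[ℝ] X)) (E C : X → ℝ) : ℝ :=
  sInf {l : ℝ | ∃ u : ℕ → X, GVanishing G u ∧ (∀ n, C (u n) ≠ 0) ∧
    l = liminf (fun n => hylenicRatio E C (u n)) atTop}

/-- `J_δ(u) = Λ(u) + δ E(u)`. -/
noncomputable def Jfun (E C : X → ℝ) (δ : ℝ) (u : X) : ℝ :=
  hylenicRatio E C u + δ * E u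

/-- A sequence is `G`-compact: some subsequence, translated by elements of `G`,
is norm-convergent. -/
def GCompactSeq (G : Subgroup (X ≃ₗᵢ[ℝ] X)) (u : ℕ → X) : Prop :=
  ∃ φ : ℕ → ℕ, StrictMono φ ∧ ∃ g : ℕ → G, ∃ L : X,
    Tendsto (fun k => (g k : X ≃ₗᵢ[ℝ] X) (u (φ k))) atTop (𝓝 L)

/-- `δ` lies in the interval `(0, δ_∞)`, where
`δ_∞ = sup {δ > 0 | ∃ v, C v ≠ 0 ∧ J_δ(v) < Λ₀}`; equivalently (since `E ≥ 0`
makes the set below an interval) there is `δ' > δ` in that set. -/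
def MemDeltaInterval (G : Subgroup (X ≃ₗᵢ[ℝ] X)) (E C : X → ℝ) (δ : ℝ) : Prop :=
  0 < δ ∧ ∃ δ' : ℝ, δ < δ' ∧ ∃ v : X, C v ≠ 0 ∧ Jfun E C δ' v < Lambda0 G E C

/-- The hylomorphy condition `inf {Λ(u) | C u ≠ 0} < Λ₀`. -/
def HylomorphyCondition (G : Subgroup (X ≃ₗᵢ[ℝ] X)) (E C : X → ℝ) : Prop :=
  sInf {r : ℝ | ∃ u : X, C u ≠ 0 ∧ r = hylenicRatio E C u} < Lambda0 G E C


section AuxHylo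
open Filter Topology

theorem min_ratio_le {a₁ a₂ b₁ b₂ : ℝ} (hb₁ : 0 < b₁) (hb₂ : 0 < b₂) :
    min (a₁ / b₁) (a₂ / b₂) ≤ (a₁ + a₂) / (b₁ + b₂) := by
  rcases le_total (a₁ / b₁) (a₂ / b₂) with h | h
  · rw [min_eq_left h]
    rw [div_le_div_iff₀ hb₁ hb₂] at h
    rw [div_le_div_iff₀ hb₁ (by linarith)]
    nlinarith
  · rw [min_eq_right h]
    rw [div_le_div_iff₀ hb₂ hb₁] at h
    rw [div_le_div_iff₀ hb₂ (by linarith)]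
    nlinarith

theorem exists_subseq_abs_ge {f : ℕ → ℝ} (h : ¬ Tendsto f atTop (𝓝 0)) :
    ∃ ε : ℝ, 0 < ε ∧ ∃ ψ : ℕ → ℕ, StrictMono ψ ∧ ∀ k, ε ≤ |f (ψ k)| := by
  have : ∃ ε > 0, ∃ᶠ n in atTop, ε ≤ |f n| := by
    by_contra hc
    push_neg at hc
    apply h
    rw [Metric.tendsto_atTop]
    intro ε hε
    have := hc (ε/2) (by linarith)
    rw [eventually_atTop] at this
    obtain ⟨N, hN⟩ := this
    refine ⟨N, fun n hn => ?_⟩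
    have := hN n hn
    rw [Real.dist_eq, sub_zero]
    linarith
  obtain ⟨ε, hε, hfreq⟩ := this
  obtain ⟨ψ, hψ, hP⟩ := extraction_of_frequently_atTop hfreq
  exact ⟨ε, hε, ψ, hψ, hP⟩

theorem liminf_nonneg' {f : ℕ → ℝ} (h : ∀ n, 0 ≤ f n) : 0 ≤ liminf f atTop := by
  rw [liminf_eq]
  by_cases hb : BddAbove {a : ℝ | ∀ᶠ n in atTop, a ≤ f n}
  · exact le_csSup hb (Eventually.of_forall h)
  · rw [Real.sSup_of_not_bddAbove hb]

theorem liminf_le_lim_of_le {f g : ℕ → ℝ} {m : ℝ} (hfg : ∀ᶠ n in atTop, f n ≤ g n)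
    (hf0 : ∀ n, 0 ≤ f n) (hg : Tendsto g atTop (𝓝 m)) : liminf f atTop ≤ m := by
  have hu : IsBoundedUnder (· ≥ ·) atTop f := ⟨0, eventually_map.2 (Eventually.of_forall hf0)⟩
  have hv : IsCoboundedUnder (· ≥ ·) atTop g :=
    IsBoundedUnder.isCoboundedUnder_ge hg.isBoundedUnder_le
  have h1 : liminf f atTop ≤ liminf g atTop := liminf_le_liminf hfg hu hv
  rwa [hg.liminf_eq] at h1

theorem bdd_of_eventually {f : ℕ → ℝ} {b : ℝ} (h : ∀ᶠ n in atTop, f n ≤ b) :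
    ∃ M : ℝ, ∀ n, f n ≤ M := by
  rw [eventually_atTop] at h
  obtain ⟨N, hN⟩ := h
  refine ⟨max b ((Finset.range (N + 1)).sup' ⟨0, by simp⟩ f), fun n => ?_⟩
  rcases le_or_gt N n with hn | hn
  · exact (hN n hn).trans (le_max_left _ _)
  · exact le_trans (Finset.le_sup' f (Finset.mem_range.2 (by omega))) (le_max_right _ _)

variable {X : Type*} [NormedAddCommGroup X] [InnerProductSpace ℝ X]

theorem exists_weak_limit [CompleteSpace X] (v : ℕ → X) (M : ℝ) (hM : ∀ n, ‖v n‖ ≤ M) :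
    ∃ φ : ℕ → ℕ, StrictMono φ ∧ ∃ w : X,
      ∀ x : X, Tendsto (fun k => (inner ℝ x (v (φ k)) : ℝ)) atTop (𝓝 (inner ℝ x w)) := by
  have hM0 : 0 ≤ M := le_trans (norm_nonneg _) (hM 0)
  -- Step 1: diagonal extraction via seq. compactness of ∏ Icc
  set S : Set (ℕ → ℝ) := Set.univ.pi (fun _ => Set.Icc (-(M*M)) (M*M)) with hS
  have hScomp : IsCompact S := isCompact_univ_pi (fun i => isCompact_Icc)
  have hmem : ∀ k, (fun m => (inner ℝ (v m) (v k) : ℝ)) ∈ S := by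
    intro k m _
    have := abs_real_inner_le_norm (v m) (v k)
    have hb : |(inner ℝ (v m) (v k) : ℝ)| ≤ M * M :=
      this.trans (mul_le_mul (hM m) (hM k) (norm_nonneg _) hM0)
    exact abs_le.mp hb
  obtain ⟨a, -, φ, hφ, hconv⟩ := hScomp.isSeqCompact (x := fun k => fun m => (inner ℝ (v m) (v k) : ℝ)) hmem
  rw [tendsto_pi_nhds] at hconv
  refine ⟨φ, hφ, ?_⟩
  -- Step 2: the set where the inner ℝ products form a Cauchy sequence
  set D : Set X := {x : X | CauchySeq (fun k => (inner ℝ x (v (φ k)) : ℝ))} with hD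
  have hDzero : (0 : X) ∈ D := by
    simp only [hD, Set.mem_setOf_eq, inner_zero_left]
    exact cauchySeq_const 0
  have hDadd : ∀ x y, x ∈ D → y ∈ D → x + y ∈ D := by
    intro x y hx hy
    simp only [hD, Set.mem_setOf_eq, inner_add_left]
    exact hx.add hy
  have hDsmul : ∀ (c : ℝ) x, x ∈ D → c • x ∈ D := by
    intro c x hx
    simp only [hD, Set.mem_setOf_eq, inner_smul_left, RCLike.conj_to_real]
    obtain ⟨l, hl⟩ := cauchySeq_tendsto_of_complete hx
    exact (hl.const_mul c).cauchySeq
  have hDv : ∀ m, v m ∈ D := fun m => (hconv m).cauchySeq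
  -- D is closed under limits (uniform bound)
  have hDclosed : ∀ x : X, (∀ ε : ℝ, 0 < ε → ∃ y ∈ D, ‖x - y‖ < ε) → x ∈ D := by
    intro x hx
    rw [hD, Set.mem_setOf_eq, Metric.cauchySeq_iff]
    intro ε hε
    obtain ⟨y, hy, hxy⟩ := hx (ε / (3 * (M + 1))) (by positivity)
    have hyC := hy
    rw [hD, Set.mem_setOf_eq, Metric.cauchySeq_iff] at hyC
    obtain ⟨N, hN⟩ := hyC (ε / 3) (by positivity)
    refine ⟨N, fun i hi j hj => ?_⟩
    have key : ∀ k : ℕ, |(inner ℝ x (v (φ k)) : ℝ) - inner ℝ y (v (φ k))| ≤ ε / 3 := by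
      intro k
      rw [← inner_sub_left]
      refine (abs_real_inner_le_norm _ _).trans ?_
      have h1 : ‖x - y‖ * ‖v (φ k)‖ ≤ ε / (3 * (M + 1)) * (M + 1) := by
        apply mul_le_mul hxy.le ((hM _).trans (by linarith)) (norm_nonneg _) (by positivity)
      calc ‖x - y‖ * ‖v (φ k)‖ ≤ ε / (3 * (M + 1)) * (M + 1) := h1
        _ = ε / 3 := by field_simp
    have h2 := hN i hi j hj
    rw [Real.dist_eq] at h2 ⊢
    have e1 := key i; have e2 := key j
    have : (inner ℝ x (v (φ i)) : ℝ) - inner ℝ x (v (φ j)) =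
        ((inner ℝ x (v (φ i)) : ℝ) - inner ℝ y (v (φ i))) + ((inner ℝ y (v (φ i)) : ℝ) - inner ℝ y (v (φ j)))
        + ((inner ℝ y (v (φ j)) : ℝ) - inner ℝ x (v (φ j))) := by ring
    rw [this]
    calc |_ + _ + _| ≤ |(inner ℝ x (v (φ i)) : ℝ) - inner ℝ y (v (φ i))| +
          |(inner ℝ y (v (φ i)) : ℝ) - inner ℝ y (v (φ j))| +
          |(inner ℝ y (v (φ j)) : ℝ) - inner ℝ x (v (φ j))| := by
            exact (abs_add_le _ _).trans (by gcongr; exact abs_add_le _ _)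
      _ < ε := by rw [abs_sub_comm (inner ℝ y (v (φ j)) : ℝ)] at *; linarith [e1, e2, h2]
  -- all of X is in D, via span + orthogonal decomposition
  set Y : Submodule ℝ X := (Submodule.span ℝ (Set.range v)).topologicalClosure with hY
  have hYD : ∀ x ∈ Y, x ∈ D := by
    intro x hx
    apply hDclosed
    intro ε hε
    have hxcl : x ∈ closure (Submodule.span ℝ (Set.range v) : Set X) := hx
    rw [Metric.mem_closure_iff] at hxcl
    obtain ⟨y, hy, hxy⟩ := hxcl ε hε
    refine ⟨y, ?_, by rwa [← dist_eq_norm]⟩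
    -- span is inside D
    refine Submodule.span_induction ?_ hDzero (fun a b _ _ ha hb => hDadd a b ha hb)
      (fun c a _ ha => hDsmul c a ha) hy
    rintro z ⟨m, rfl⟩; exact hDv m
  have hall : ∀ x : X, x ∈ D := by
    intro x
    have : CompleteSpace Y := (Submodule.span ℝ (Set.range v)).isClosed_topologicalClosure.completeSpace_coe
    obtain ⟨y, hy, z, hz, rfl⟩ := Y.exists_add_mem_mem_orthogonal x
    apply hDadd _ _ (hYD y hy)
    -- z ⟂ every v m, so inner ℝ z (v (φ k)) = 0
    have hz0 : ∀ k, (inner ℝ z (v (φ k)) : ℝ) = 0 := by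
      intro k
      have hvY : v (φ k) ∈ Y := Submodule.le_topologicalClosure _ (Submodule.subset_span ⟨φ k, rfl⟩)
      exact Submodule.inner_left_of_mem_orthogonal hvY hz
    simp only [hD, Set.mem_setOf_eq]
    simp only [hz0]
    exact cauchySeq_const 0
  -- Step 3: build the limit functional and use Riesz
  have hlim : ∀ x : X, ∃ l : ℝ, Tendsto (fun k => (inner ℝ x (v (φ k)) : ℝ)) atTop (𝓝 l) :=
    fun x => cauchySeq_tendsto_of_complete (hall x)
  choose F hF using hlim
  have hFadd : ∀ x y, F (x + y) = F x + F y := by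
    intro x y
    refine tendsto_nhds_unique (hF (x + y)) ?_
    simpa only [inner_add_left] using (hF x).add (hF y)
  have hFsmul : ∀ (c : ℝ) x, F (c • x) = c * F x := by
    intro c x
    refine tendsto_nhds_unique (hF (c • x)) ?_
    simpa only [inner_smul_left, RCLike.conj_to_real] using (hF x).const_mul c
  have hFbound : ∀ x : X, |F x| ≤ M * ‖x‖ := by
    intro x
    have h1 : Tendsto (fun k => |(inner ℝ x (v (φ k)) : ℝ)|) atTop (𝓝 |F x|) := (hF x).abs
    refine le_of_tendsto h1 (Eventually.of_forall fun k => ?_)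
    calc |(inner ℝ x (v (φ k)) : ℝ)| ≤ ‖x‖ * ‖v (φ k)‖ := abs_real_inner_le_norm _ _
      _ ≤ ‖x‖ * M := mul_le_mul_of_nonneg_left (hM _) (norm_nonneg _)
      _ = M * ‖x‖ := mul_comm _ _
  set Flin : X →ₗ[ℝ] ℝ :=
    { toFun := F, map_add' := hFadd, map_smul' := fun c x => by simp [hFsmul] } with hFlin
  set Fc : X →L[ℝ] ℝ := Flin.mkContinuous M (fun x => by
    rw [show ‖Flin x‖ = |F x| from rfl]; exact hFbound x) with hFc
  refine ⟨(InnerProductSpace.toDual ℝ X).symm Fc, fun x => ?_⟩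
  have : (inner ℝ x ((InnerProductSpace.toDual ℝ X).symm Fc) : ℝ) = F x := by
    rw [real_inner_comm]
    exact InnerProductSpace.toDual_symm_apply
  rw [this]; exact hF x


theorem hylo_key [CompleteSpace X] (G : Subgroup (X ≃ₗᵢ[ℝ] X)) (E C : X → ℝ)
    (hEc : Continuous E) (hCc : Continuous C)
    (hEG : ∀ g : G, ∀ u : X, E ((g : X ≃ₗᵢ[ℝ] X) u) = E u)
    (hCG : ∀ g : G, ∀ u : X, C ((g : X ≃ₗᵢ[ℝ] X) u) = C u)
    (hE0 : E 0 = 0) (hC0 : C 0 = 0)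
    (hEs : SplittingProperty E) (hCs : SplittingProperty C)
    (hEpos : ∀ u : X, u ≠ 0 → 0 < E u)
    (hEcoer : ∀ u : ℕ → X, Tendsto (fun n => ‖u n‖) atTop atTop →
      Tendsto (fun n => E (u n)) atTop atTop)
    (hEzero : ∀ u : ℕ → X, Tendsto (fun n => E (u n)) atTop (𝓝 0) →
      Tendsto (fun n => ‖u n‖) atTop (𝓝 0))
    (δ m : ℝ) (hδpos : 0 < δ)
    (hm_lb : ∀ u : X, C u ≠ 0 → m ≤ Jfun E C δ u)
    (hm_lt : m < Lambda0 G E C)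
    (z : ℕ → X) (hz : ∀ n, C (z n) ≠ 0)
    (hJz : Tendsto (fun n => Jfun E C δ (z n)) atTop (𝓝 m)) :
    ∃ φ : ℕ → ℕ, StrictMono φ ∧ ∃ g : ℕ → G, ∃ w : X, C w ≠ 0 ∧ Jfun E C δ w = m ∧
      Tendsto (fun k => ((g k : X ≃ₗᵢ[ℝ] X)) (z (φ k))) atTop (𝓝 w) := by
  classical
  have hE0' : ∀ u : X, 0 ≤ E u := by
    intro u
    by_cases h : u = 0
    · simp [h, hE0]
    · exact (hEpos u h).le
  have hΛnn : ∀ u : X, 0 ≤ hylenicRatio E C u := fun u => div_nonneg (hE0' u) (abs_nonneg _)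
  have hΛleJ : ∀ u : X, hylenicRatio E C u ≤ Jfun E C δ u := fun u =>
    le_add_of_nonneg_right (mul_nonneg hδpos.le (hE0' u))
  have hJinv : ∀ (g : G) (u : X), Jfun E C δ ((g : X ≃ₗᵢ[ℝ] X) u) = Jfun E C δ u := by
    intro g u; simp [Jfun, hylenicRatio, hEG g u, hCG g u]
  -- G-vanishing sequences with J → m give a contradiction
  have hvan : ∀ y : ℕ → X, GVanishing G y → (∀ n, C (y n) ≠ 0) →
      Tendsto (fun n => Jfun E C δ (y n)) atTop (𝓝 m) → False := by
    intro y hGv hCy hJy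
    have hBdd : BddBelow {l : ℝ | ∃ u : ℕ → X, GVanishing G u ∧ (∀ n, C (u n) ≠ 0) ∧
        l = liminf (fun n => hylenicRatio E C (u n)) atTop} := by
      refine ⟨0, ?_⟩
      rintro l ⟨u, -, -, rfl⟩
      exact liminf_nonneg' (fun n => hΛnn (u n))
    have h1 : Lambda0 G E C ≤ liminf (fun n => hylenicRatio E C (y n)) atTop :=
      csInf_le hBdd ⟨y, hGv, hCy, rfl⟩
    have h2 : liminf (fun n => hylenicRatio E C (y n)) atTop ≤ m :=
      liminf_le_lim_of_le (Eventually.of_forall fun n => hΛleJ (y n)) (fun n => hΛnn (y n)) hJy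
    linarith
  -- eventual upper bound on E along z
  have hJub : ∀ᶠ n in atTop, Jfun E C δ (z n) ≤ m + 1 :=
    hJz.eventually (eventually_le_nhds (lt_add_one m))
  have hEub : ∀ᶠ n in atTop, E (z n) ≤ (m + 1) / δ := by
    refine hJub.mono fun n hn => ?_
    have h1 := hΛnn (z n)
    rw [le_div_iff₀ hδpos]
    have : Jfun E C δ (z n) = hylenicRatio E C (z n) + δ * E (z n) := rfl
    nlinarith
  -- norm bound
  have hcoerB : ∃ R : ℝ, ∀ u : X, E u ≤ (m + 1) / δ → ‖u‖ ≤ R := by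
    by_contra hc
    push_neg at hc
    choose u hu1 hu2 using fun k : ℕ => hc (k : ℝ)
    have h1 : Tendsto (fun k => ‖u k‖) atTop atTop :=
      tendsto_atTop_mono (fun k => (hu2 k).le) tendsto_natCast_atTop_atTop
    obtain ⟨k, hk⟩ := ((hEcoer u h1).eventually_gt_atTop ((m + 1) / δ)).exists
    exact absurd (hu1 k) (not_le.2 hk)
  obtain ⟨R, hR⟩ := hcoerB
  obtain ⟨M, hM⟩ := bdd_of_eventually (hEub.mono fun n hn => hR (z n) hn)
  -- eventual lower bound on E along z
  have ha : ∃ a : ℝ, 0 < a ∧ ∀ᶠ n in atTop, a ≤ E (z n) := by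
    by_contra hc
    push_neg at hc
    have hfreq : ∀ k : ℕ, ∃ᶠ n in atTop, E (z n) < 1 / ((k : ℝ) + 1) := by
      intro k
      have h1 := hc (1 / ((k : ℝ) + 1)) (by positivity)
      exact h1
    obtain ⟨ψ, hψ, hP⟩ := extraction_forall_of_frequently hfreq
    have hE0seq : Tendsto (fun k => E (z (ψ k))) atTop (𝓝 0) :=
      tendsto_of_tendsto_of_tendsto_of_le_of_le tendsto_const_nhds
        tendsto_one_div_add_atTop_nhds_zero_nat (fun k => hE0' _) (fun k => (hP k).le)
    have hnorm0 := hEzero _ hE0seq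
    have hGv : GVanishing G (fun k => z (ψ k)) := by
      constructor
      · exact ⟨M, fun k => hM (ψ k)⟩
      · intro φ' hφ' g x
        refine squeeze_zero_norm (a := fun k => ‖x‖ * ‖z (ψ (φ' k))‖) (fun k => ?_) ?_
        · calc ‖(inner ℝ x ((g k : X ≃ₗᵢ[ℝ] X) (z (ψ (φ' k)))) : ℝ)‖
              ≤ ‖x‖ * ‖(g k : X ≃ₗᵢ[ℝ] X) (z (ψ (φ' k)))‖ := norm_inner_le_norm _ _
            _ = ‖x‖ * ‖z (ψ (φ' k))‖ := by rw [LinearIsometryEquiv.norm_map]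
        · have h2 : Tendsto (fun k => ‖z (ψ (φ' k))‖) atTop (𝓝 0) :=
            hnorm0.comp hφ'.tendsto_atTop
          simpa using h2.const_mul ‖x‖
    exact hvan _ hGv (fun k => hz (ψ k)) (hJz.comp hψ.tendsto_atTop)
  obtain ⟨a, ha0, haev⟩ := ha
  -- z is not G-vanishing
  have hstep : ∃ φ₁ : ℕ → ℕ, StrictMono φ₁ ∧ ∃ g₁ : ℕ → G,
      ¬ WeakNullSeq (fun k => (g₁ k : X ≃ₗᵢ[ℝ] X) (z (φ₁ k))) := by
    by_contra hc
    push_neg at hc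
    exact hvan z ⟨⟨M, hM⟩, fun φ' hφ' g => hc φ' hφ' g⟩ hz hJz
  obtain ⟨φ₁, hφ₁, g₁, hg₁⟩ := hstep
  rw [WeakNullSeq] at hg₁
  push_neg at hg₁
  obtain ⟨x₀, hx₀⟩ := hg₁
  obtain ⟨ε, hε, ψ₁, hψ₁, hεlb⟩ := exists_subseq_abs_ge hx₀
  
  -- weakly convergent subsequence of the translated sequence
  have hvM : ∀ k, ‖(g₁ (ψ₁ k) : X ≃ₗᵢ[ℝ] X) (z (φ₁ (ψ₁ k)))‖ ≤ M := fun k => by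
    rw [LinearIsometryEquiv.norm_map]; exact hM _
  obtain ⟨ψ₂, hψ₂, w, hw⟩ := exists_weak_limit
    (fun k => (g₁ (ψ₁ k) : X ≃ₗᵢ[ℝ] X) (z (φ₁ (ψ₁ k)))) M hvM
  have hwne : w ≠ 0 := by
    have h1 : Tendsto
        (fun k => |(inner ℝ x₀ ((g₁ (ψ₁ (ψ₂ k)) : X ≃ₗᵢ[ℝ] X) (z (φ₁ (ψ₁ (ψ₂ k))))) : ℝ)|)
        atTop (𝓝 |(inner ℝ x₀ w : ℝ)|) := (hw x₀).abs
    have h2 : ε ≤ |(inner ℝ x₀ w : ℝ)| :=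
      ge_of_tendsto h1 (Eventually.of_forall fun k => hεlb (ψ₂ k))
    intro h
    rw [h, inner_zero_right] at h2
    simp only [abs_zero] at h2
    linarith
  -- facts along the composed sequence
  have hJV : Tendsto
      (fun k => Jfun E C δ ((g₁ (ψ₁ (ψ₂ k)) : X ≃ₗᵢ[ℝ] X) (z (φ₁ (ψ₁ (ψ₂ k)))))) atTop (𝓝 m) := by
    have h1 : Tendsto (fun k => Jfun E C δ (z (φ₁ (ψ₁ (ψ₂ k))))) atTop (𝓝 m) :=
      hJz.comp ((hφ₁.comp (hψ₁.comp hψ₂)).tendsto_atTop)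
    simpa only [hJinv] using h1
  have haV : ∀ᶠ k in atTop,
      a ≤ E ((g₁ (ψ₁ (ψ₂ k)) : X ≃ₗᵢ[ℝ] X) (z (φ₁ (ψ₁ (ψ₂ k))))) := by
    have h1 : ∀ᶠ k in atTop, a ≤ E (z (φ₁ (ψ₁ (ψ₂ k)))) :=
      ((hφ₁.comp (hψ₁.comp hψ₂)).tendsto_atTop).eventually haev
    simpa only [hEG] using h1
  have hCV : ∀ k, C ((g₁ (ψ₁ (ψ₂ k)) : X ≃ₗᵢ[ℝ] X) (z (φ₁ (ψ₁ (ψ₂ k))))) ≠ 0 := fun k => by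
    rw [hCG]; exact hz _
  have hΛub : ∀ᶠ k in atTop,
      hylenicRatio E C ((g₁ (ψ₁ (ψ₂ k)) : X ≃ₗᵢ[ℝ] X) (z (φ₁ (ψ₁ (ψ₂ k))))) ≤ m + 1 :=
    (hJV.eventually (eventually_le_nhds (lt_add_one m))).mono fun k hk => (hΛleJ _).trans hk
  obtain ⟨N₁, hN₁⟩ := eventually_atTop.1 (hΛub.and haV)
  -- tail-shifted sequence Y
  set Y : ℕ → X :=
    fun k => (g₁ (ψ₁ (ψ₂ (k + N₁))) : X ≃ₗᵢ[ℝ] X) (z (φ₁ (ψ₁ (ψ₂ (k + N₁))))) with hYdef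
  have hJY : Tendsto (fun k => Jfun E C δ (Y k)) atTop (𝓝 m) :=
    hJV.comp (tendsto_add_atTop_nat N₁)
  have haY : ∀ k, a ≤ E (Y k) := fun k => (hN₁ (k + N₁) (Nat.le_add_left N₁ k)).2
  have hCY : ∀ k, C (Y k) ≠ 0 := fun k => hCV (k + N₁)
  have hwY : ∀ x : X, Tendsto (fun k => (inner ℝ x (Y k) : ℝ)) atTop (𝓝 (inner ℝ x w)) :=
    fun x => (hw x).comp (tendsto_add_atTop_nat N₁)
  have hΛmem : ∀ k, hylenicRatio E C (Y k) ∈ Set.Icc (0 : ℝ) (m + 1) := fun k =>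
    ⟨hΛnn _, (hN₁ (k + N₁) (Nat.le_add_left N₁ k)).1⟩
  obtain ⟨lb, hlbmem, ψ₃, hψ₃, hΛlim⟩ :=
    tendsto_subseq_of_bounded (Metric.isBounded_Icc 0 (m+1)) hΛmem
  rw [IsClosed.closure_eq isClosed_Icc] at hlbmem
  -- the sequence U
  set U : ℕ → X := fun k => Y (ψ₃ k) with hUdef
  have hJU : Tendsto (fun k => Jfun E C δ (U k)) atTop (𝓝 m) := hJY.comp hψ₃.tendsto_atTop
  have hΛU : Tendsto (fun k => hylenicRatio E C (U k)) atTop (𝓝 lb) := hΛlim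
  have haU : ∀ k, a ≤ E (U k) := fun k => haY (ψ₃ k)
  have hCU : ∀ k, C (U k) ≠ 0 := fun k => hCY (ψ₃ k)
  have hwU : ∀ x : X, Tendsto (fun k => (inner ℝ x (U k) : ℝ)) atTop (𝓝 (inner ℝ x w)) :=
    fun x => (hwY x).comp hψ₃.tendsto_atTop
  have hEeq : ∀ k, E (U k) = (Jfun E C δ (U k) - hylenicRatio E C (U k)) / δ := by
    intro k
    have h1 : Jfun E C δ (U k) = hylenicRatio E C (U k) + δ * E (U k) := rfl
    rw [h1]
    field_simp; ring
  have hEU : Tendsto (fun k => E (U k)) atTop (𝓝 ((m - lb) / δ)) := by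
    have h1 : (fun k => E (U k)) =
        fun k => (Jfun E C δ (U k) - hylenicRatio E C (U k)) / δ := funext hEeq
    rw [h1]
    exact (hJU.sub hΛU).div_const δ
  set Eb : ℝ := (m - lb) / δ with hEbdef
  have hEb_a : a ≤ Eb := ge_of_tendsto hEU (Eventually.of_forall haU)
  have hEbpos : 0 < Eb := lt_of_lt_of_le ha0 hEb_a
  have hm_eq : m = lb + δ * Eb := by rw [hEbdef]; field_simp; ring
  have hEw : 0 < E w := hEpos w hwne
  -- splitting
  have hwnull : WeakNullSeq (fun k => U k - w) := by
    intro x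
    have h1 := (hwU x).sub (tendsto_const_nhds (x := (inner ℝ x w : ℝ)))
    simpa only [inner_sub_right, sub_self] using h1
  have hdE := hEs w _ hwnull
  have hdC := hCs w _ hwnull
  have hadd : ∀ k, w + (U k - w) = U k := fun k => by abel
  have hEwj : Tendsto (fun k => E (U k - w)) atTop (𝓝 (Eb - E w)) := by
    have h1 : (fun k => E (U k - w)) =
        fun k => E (U k) - E w - (E (w + (U k - w)) - E w - E (U k - w)) := by
      funext k; rw [hadd k]; ring
    rw [h1]
    simpa using (hEU.sub (tendsto_const_nhds (x := E w))).sub hdE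
  set E₂ : ℝ := Eb - E w with hE₂def
  have hE₂nn : 0 ≤ E₂ := ge_of_tendsto hEwj (Eventually.of_forall fun k => hE0' _)
  set dC : ℕ → ℝ := fun k => C (w + (U k - w)) - C w - C (U k - w) with hdCdef
  have hdC' : Tendsto dC atTop (𝓝 0) := hdC
  have hCwj_eq : ∀ k, C (U k - w) = C (U k) - C w - dC k := fun k => by
    rw [hdCdef]; simp only []; rw [hadd k]; ring
  have habs : ∀ k, |C (U k)| = E (U k) * (hylenicRatio E C (U k))⁻¹ := by
    intro k
    have hEk : E (U k) ≠ 0 := (lt_of_lt_of_le ha0 (haU k)).ne'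
    have hCk : |C (U k)| ≠ 0 := abs_ne_zero.2 (hCU k)
    have h1 : hylenicRatio E C (U k) = E (U k) / |C (U k)| := rfl
    rw [h1]
    field_simp
  -- rule out lb = 0
  have hlbpos : 0 < lb := by
    rcases (hlbmem.1).eq_or_lt with h0 | h
    · exfalso
      have hΛUpos : ∀ k, 0 < hylenicRatio E C (U k) := fun k =>
        div_pos (lt_of_lt_of_le ha0 (haU k)) (abs_pos.2 (hCU k))
      have h1 : Tendsto (fun k => hylenicRatio E C (U k)) atTop (𝓝[>] 0) :=
        tendsto_nhdsWithin_of_tendsto_nhds_of_eventually_within _ (h0 ▸ hΛU)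
          (Eventually.of_forall hΛUpos)
      have h2 : Tendsto (fun k => (hylenicRatio E C (U k))⁻¹) atTop atTop :=
        tendsto_inv_nhdsGT_zero.comp h1
      have h3 : Tendsto (fun k => |C (U k)|) atTop atTop := by
        have h3' : (fun k => |C (U k)|) = fun k => E (U k) * (hylenicRatio E C (U k))⁻¹ :=
          funext habs
        rw [h3']
        exact Filter.Tendsto.pos_mul_atTop hEbpos hEU h2
      have hg : Tendsto (fun k => -(|C w| + |dC k|)) atTop (𝓝 (-(|C w| + |(0 : ℝ)|))) :=
        ((hdC'.abs.const_add |C w|).neg)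
      have h4 : Tendsto (fun k => |C (U k)| + -(|C w| + |dC k|)) atTop atTop :=
        h3.atTop_add hg
      have h5 : ∀ k, |C (U k)| + -(|C w| + |dC k|) ≤ |C (U k - w)| := by
        intro k
        have hck := hCwj_eq k
        have t1 : |C w + dC k| ≤ |C w| + |dC k| := abs_add_le _ _
        have t2 : |C (U k)| - |C w + dC k| ≤ |C (U k) - (C w + dC k)| :=
          abs_sub_abs_le_abs_sub _ _
        have t3 : C (U k) - (C w + dC k) = C (U k - w) := by rw [hck]; ring
        rw [t3] at t2
        linarith
      have h6 : Tendsto (fun k => |C (U k - w)|) atTop atTop := tendsto_atTop_mono h5 h4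
      have h7 : ∀ᶠ k in atTop, C (U k - w) ≠ 0 :=
        (h6.eventually_gt_atTop 0).mono fun k hk => abs_pos.1 hk
      have h8 : Tendsto (fun k => hylenicRatio E C (U k - w)) atTop (𝓝 0) := by
        have h8' : (fun k => hylenicRatio E C (U k - w)) =
            fun k => E (U k - w) / |C (U k - w)| := rfl
        rw [h8']
        exact hEwj.div_atTop h6
      have h9 : Tendsto (fun k => Jfun E C δ (U k - w)) atTop (𝓝 (0 + δ * (Eb - E w))) := by
        have h9' : (fun k => Jfun E C δ (U k - w)) =
            fun k => hylenicRatio E C (U k - w) + δ * E (U k - w) := rfl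
        rw [h9']
        exact h8.add (hEwj.const_mul δ)
      have h10 : m ≤ 0 + δ * (Eb - E w) := ge_of_tendsto h9 (h7.mono fun k hk => hm_lb _ hk)
      have h13 : δ * (Eb - E w) = δ * Eb - δ * E w := by ring
      linarith [mul_pos hδpos hEw]
    · exact h
  -- limit of |C (U k)| and extraction of C (U k)
  have hCabs : Tendsto (fun k => |C (U k)|) atTop (𝓝 (Eb * lb⁻¹)) := by
    have h1 : (fun k => |C (U k)|) = fun k => E (U k) * (hylenicRatio E C (U k))⁻¹ :=
      funext habs
    rw [h1]
    exact hEU.mul (hΛU.inv₀ hlbpos.ne')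
  set cb : ℝ := Eb * lb⁻¹ with hcbdef
  have hcbpos : 0 < cb := mul_pos hEbpos (inv_pos.2 hlbpos)
  have hlb_eq : lb = Eb / cb := by rw [hcbdef]; field_simp
  have hCb : ∀ᶠ k in atTop, C (U k) ∈ Set.Icc (-(cb + 1)) (cb + 1) :=
    (hCabs.eventually (eventually_le_nhds (lt_add_one cb))).mono fun k hk =>
      ⟨by linarith [neg_abs_le (C (U k))], by linarith [le_abs_self (C (U k))]⟩
  obtain ⟨N₂, hN₂⟩ := eventually_atTop.1 hCb
  obtain ⟨ch, hchmem, ψ₄, hψ₄, hchlim⟩ := tendsto_subseq_of_bounded (Metric.isBounded_Icc (-(cb+1)) (cb+1))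
      (x := fun k => C (U (k + N₂))) (fun k => hN₂ (k + N₂) (Nat.le_add_left _ _))
  set σ : ℕ → ℕ := fun k => ψ₄ k + N₂ with hσdef
  have hσmono : StrictMono σ := fun p q h => Nat.add_lt_add_right (hψ₄ h) N₂
  have hσtend : Tendsto σ atTop atTop := hσmono.tendsto_atTop
  have hC3 : Tendsto (fun k => C (U (σ k))) atTop (𝓝 ch) := hchlim
  have hcabs3 : Tendsto (fun k => |C (U (σ k))|) atTop (𝓝 cb) := hCabs.comp hσtend
  have hchabs : |ch| = cb := tendsto_nhds_unique hC3.abs hcabs3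
  have hchne : ch ≠ 0 := fun h => by rw [h, abs_zero] at hchabs; linarith
  have hE3 : Tendsto (fun k => E (U (σ k))) atTop (𝓝 Eb) := hEU.comp hσtend
  have hEwj3 : Tendsto (fun k => E (U (σ k) - w)) atTop (𝓝 E₂) := hEwj.comp hσtend
  have hdC3 : Tendsto (fun k => dC (σ k)) atTop (𝓝 0) := hdC'.comp hσtend
  have hCwj3 : Tendsto (fun k => C (U (σ k) - w)) atTop (𝓝 (ch - C w)) := by
    have h1 : (fun k => C (U (σ k) - w)) = fun k => C (U (σ k)) - C w - dC (σ k) :=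
      funext fun k => hCwj_eq (σ k)
    rw [h1]
    simpa using (hC3.sub tendsto_const_nhds).sub hdC3
  set c₂ : ℝ := ch - C w with hc₂def
  -- E₂ = 0
  have hE₂0 : E₂ = 0 := by
    by_contra hne
    have hE₂pos : 0 < E₂ := hE₂nn.lt_of_ne (Ne.symm hne)
    have hEwlt : E w < Eb := by
      have : E₂ = Eb - E w := hE₂def
      linarith
    have hmm : m = Eb / cb + δ * Eb := by rw [hm_eq, hlb_eq]
    by_cases hCw : C w = 0
    · have hc₂abs : Tendsto (fun k => |C (U (σ k) - w)|) atTop (𝓝 cb) := by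
        have h1 := hCwj3.abs
        rw [hc₂def, hCw, sub_zero, hchabs] at h1
        exact h1
      have hne0 : ∀ᶠ k in atTop, C (U (σ k) - w) ≠ 0 :=
        (hc₂abs.eventually (eventually_gt_nhds (half_lt_self hcbpos))).mono fun k hk =>
          abs_pos.1 (lt_trans (by positivity) hk)
      have hJ3 : Tendsto (fun k => Jfun E C δ (U (σ k) - w)) atTop
          (𝓝 (E₂ / cb + δ * E₂)) := by
        have h1 : (fun k => Jfun E C δ (U (σ k) - w)) =
            fun k => E (U (σ k) - w) / |C (U (σ k) - w)| + δ * E (U (σ k) - w) := rfl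
        rw [h1]
        exact (hEwj3.div hc₂abs hcbpos.ne').add (hEwj3.const_mul δ)
      have h10 : m ≤ E₂ / cb + δ * E₂ := ge_of_tendsto hJ3 (hne0.mono fun k hk => hm_lb _ hk)
      have h11 : 0 < E w / cb := div_pos hEw hcbpos
      have h12 : Eb / cb = E₂ / cb + E w / cb := by
        rw [hE₂def]; field_simp; ring
      have h13 : δ * E₂ = δ * Eb - δ * E w := by rw [hE₂def]; ring
      linarith [mul_pos hδpos hEw]
    · by_cases hc₂0 : c₂ = 0
      · have hchw : ch = C w := by
          have : ch - C w = 0 := hc₂0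
          linarith
        have hCwabs : |C w| = cb := by rw [← hchw]; exact hchabs
        have hJw := hm_lb w hCw
        have hJweq : Jfun E C δ w = E w / cb + δ * E w := by
          have h1 : Jfun E C δ w = E w / |C w| + δ * E w := rfl
          rw [h1, hCwabs]
        rw [hJweq] at hJw
        have h12 : Eb / cb = E w / cb + (Eb - E w) / cb := by field_simp; ring
        have h11 : 0 < (Eb - E w) / cb := div_pos (by linarith) hcbpos
        have h13 : δ * Eb - δ * E w = δ * (Eb - E w) := by ring
        linarith [mul_pos hδpos (sub_pos.2 hEwlt)]
      · have hCwabs : 0 < |C w| := abs_pos.2 hCw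
        have hc₂abs : 0 < |c₂| := abs_pos.2 hc₂0
        have htri : cb ≤ |C w| + |c₂| := by
          have h1 : ch = C w + c₂ := by rw [hc₂def]; ring
          calc cb = |ch| := hchabs.symm
            _ = |C w + c₂| := by rw [h1]
            _ ≤ |C w| + |c₂| := abs_add_le _ _
        have hmin := min_ratio_le (a₁ := E w) (a₂ := E₂) hCwabs hc₂abs
        have hsum : E w + E₂ = Eb := by rw [hE₂def]; ring
        have h2 : (E w + E₂) / (|C w| + |c₂|) ≤ Eb / cb := by
          rw [hsum, div_le_div_iff₀ (by positivity) hcbpos]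
          exact mul_le_mul_of_nonneg_left htri hEbpos.le
        rcases le_total (E w / |C w|) (E₂ / |c₂|) with hmc | hmc
        · have h3 : E w / |C w| ≤ Eb / cb := by
            rw [min_eq_left hmc] at hmin
            exact hmin.trans h2
          have hJw := hm_lb w hCw
          have hJweq : Jfun E C δ w = E w / |C w| + δ * E w := rfl
          rw [hJweq] at hJw
          have h13 : δ * E₂ = δ * Eb - δ * E w := by rw [hE₂def]; ring
          linarith [mul_pos hδpos hE₂pos]
        · have h3 : E₂ / |c₂| ≤ Eb / cb := by
            rw [min_eq_right hmc] at hmin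
            exact hmin.trans h2
          have hne0 : ∀ᶠ k in atTop, C (U (σ k) - w) ≠ 0 :=
            ((hCwj3.abs).eventually (eventually_gt_nhds (half_lt_self hc₂abs))).mono
              fun k hk => abs_pos.1 (lt_trans (by positivity) hk)
          have hJ3 : Tendsto (fun k => Jfun E C δ (U (σ k) - w)) atTop
              (𝓝 (E₂ / |c₂| + δ * E₂)) := by
            have h1 : (fun k => Jfun E C δ (U (σ k) - w)) =
                fun k => E (U (σ k) - w) / |C (U (σ k) - w)| + δ * E (U (σ k) - w) := rfl
            rw [h1]
            exact (hEwj3.div hCwj3.abs hc₂abs.ne').add (hEwj3.const_mul δ)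
          have h10 : m ≤ E₂ / |c₂| + δ * E₂ :=
            ge_of_tendsto hJ3 (hne0.mono fun k hk => hm_lb _ hk)
          have h13 : δ * E₂ = δ * Eb - δ * E w := by rw [hE₂def]; ring
          linarith [mul_pos hδpos hEw]
  -- strong convergence
  have hEwj30 : Tendsto (fun k => E (U (σ k) - w)) atTop (𝓝 0) := hE₂0 ▸ hEwj3
  have hnorm0 : Tendsto (fun k => ‖U (σ k) - w‖) atTop (𝓝 0) := hEzero _ hEwj30
  have hU3w : Tendsto (fun k => U (σ k)) atTop (𝓝 w) := by
    have h1 : Tendsto (fun k => U (σ k) - w) atTop (𝓝 0) :=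
      tendsto_zero_iff_norm_tendsto_zero.2 hnorm0
    exact tendsto_sub_nhds_zero_iff.1 h1
  have hCwval : C w = ch := tendsto_nhds_unique ((hCc.tendsto w).comp hU3w) hC3
  have hEwval : E w = Eb := tendsto_nhds_unique ((hEc.tendsto w).comp hU3w) hE3
  have hCwne : C w ≠ 0 := by rw [hCwval]; exact hchne
  have hJwm : Jfun E C δ w = m := by
    have h1 : |C w| = cb := by rw [hCwval]; exact hchabs
    have h2 : Jfun E C δ w = E w / |C w| + δ * E w := rfl
    rw [h2, h1, hEwval, ← hlb_eq]
    linarith [hm_eq]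
  refine ⟨fun k => φ₁ (ψ₁ (ψ₂ (ψ₃ (σ k) + N₁))), ?_,
    fun k => g₁ (ψ₁ (ψ₂ (ψ₃ (σ k) + N₁))), w, hCwne, hJwm, ?_⟩
  · exact fun p q h =>
      hφ₁ (hψ₁ (hψ₂ (Nat.add_lt_add_right (hψ₃ (hσmono h)) N₁)))
  · exact hU3w


end AuxHylo

/-- Abstract existence theorem for hylomorphic solitons (Theorem `astra1`):
under (EC-0)–(EC-3) and the hylomorphy condition, if the evolution `γ`
preserves `E` and `C`, then for every `δ ∈ (0, δ_∞)` there are `e_δ, c_δ > 0`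
such that `Γ(e_δ, c_δ) = {u | E u = e_δ ∧ |C u| = c_δ}` is nonempty, does not
contain `0`, is invariant, `G`-compact, consists of minimizers of `E` on
`{u | |C u| = c_δ}`, and is stable. -/
theorem stmt_12 [CompleteSpace X] (G : Subgroup (X ≃ₗᵢ[ℝ] X)) (E C : X → ℝ)
    (hEc : Continuous E) (hCc : Continuous C)
    (hEG : ∀ g : G, ∀ u : X, E ((g : X ≃ₗᵢ[ℝ] X) u) = E u)
    (hCG : ∀ g : G, ∀ u : X, C ((g : X ≃ₗᵢ[ℝ] X) u) = C u)
    (hE0 : E 0 = 0) (hC0 : C 0 = 0)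
    (hEs : SplittingProperty E) (hCs : SplittingProperty C)
    (hEpos : ∀ u : X, u ≠ 0 → 0 < E u)
    (hEcoer : ∀ u : ℕ → X, Tendsto (fun n => ‖u n‖) atTop atTop →
      Tendsto (fun n => E (u n)) atTop atTop)
    (hEzero : ∀ u : ℕ → X, Tendsto (fun n => E (u n)) atTop (𝓝 0) →
      Tendsto (fun n => ‖u n‖) atTop (𝓝 0))
    (hhylo : HylomorphyCondition G E C)
    (γ : ℝ → X → X)
    (hγE : ∀ t : ℝ, ∀ u : X, E (γ t u) = E u)
    (hγC : ∀ t : ℝ, ∀ u : X, C (γ t u) = C u)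
    (δ : ℝ) (hδ : MemDeltaInterval G E C δ) :
    ∃ eδ cδ : ℝ, 0 < eδ ∧ 0 < cδ ∧
      ∃ Γ : Set X, Γ = {u : X | E u = eδ ∧ |C u| = cδ} ∧
        Γ.Nonempty ∧
        (0 : X) ∉ Γ ∧
        (∀ u ∈ Γ, ∀ t : ℝ, γ t u ∈ Γ) ∧
        (∀ u : ℕ → X, (∀ n, u n ∈ Γ) → GCompactSeq G u) ∧
        (∀ u ∈ Γ, ∀ v : X, |C v| = cδ → E u ≤ E v) ∧
        (∀ ε : ℝ, 0 < ε → ∃ η : ℝ, 0 < η ∧ ∀ u : X, Metric.infDist u Γ ≤ η →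
          ∀ t : ℝ, 0 ≤ t → Metric.infDist (γ t u) Γ ≤ ε) := by
  obtain ⟨hδpos, δ', hδδ', v, hCv, hJv⟩ := hδ
  have hE0' : ∀ u : X, 0 ≤ E u := by
    intro u
    by_cases h : u = 0
    · simp [h, hE0]
    · exact (hEpos u h).le
  have hJnn : ∀ u : X, 0 ≤ Jfun E C δ u := fun u =>
    add_nonneg (div_nonneg (hE0' u) (abs_nonneg _)) (mul_nonneg hδpos.le (hE0' u))
  have hSne : Set.Nonempty {r : ℝ | ∃ u : X, C u ≠ 0 ∧ r = Jfun E C δ u} :=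
    ⟨Jfun E C δ v, v, hCv, rfl⟩
  have hSbdd : BddBelow {r : ℝ | ∃ u : X, C u ≠ 0 ∧ r = Jfun E C δ u} := by
    refine ⟨0, ?_⟩
    rintro r ⟨u, -, rfl⟩
    exact hJnn u
  set m : ℝ := sInf {r : ℝ | ∃ u : X, C u ≠ 0 ∧ r = Jfun E C δ u} with hmdef
  have hm_lb : ∀ u : X, C u ≠ 0 → m ≤ Jfun E C δ u := fun u hu => csInf_le hSbdd ⟨u, hu, rfl⟩
  have hJle : Jfun E C δ v < Lambda0 G E C := by
    have h1 : Jfun E C δ v ≤ Jfun E C δ' v := by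
      have h2 : Jfun E C δ v = hylenicRatio E C v + δ * E v := rfl
      have h3 : Jfun E C δ' v = hylenicRatio E C v + δ' * E v := rfl
      rw [h2, h3]
      nlinarith [hE0' v, hδδ']
    linarith
  have hm_lt : m < Lambda0 G E C := lt_of_le_of_lt (hm_lb v hCv) hJle
  -- minimizing sequence
  have hseq : ∀ n : ℕ, ∃ u : X, C u ≠ 0 ∧ Jfun E C δ u < m + 1 / ((n : ℝ) + 1) := by
    intro n
    have h1 : m < m + 1 / ((n : ℝ) + 1) := lt_add_of_pos_right m (by positivity)
    obtain ⟨r, ⟨u, hu, rfl⟩, hr⟩ := exists_lt_of_csInf_lt hSne h1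
    exact ⟨u, hu, hr⟩
  choose z hz hJzlt using hseq
  have hJz : Tendsto (fun n => Jfun E C δ (z n)) atTop (𝓝 m) := by
    have hup : Tendsto (fun n : ℕ => m + 1 / ((n : ℝ) + 1)) atTop (𝓝 (m + 0)) :=
      tendsto_const_nhds.add tendsto_one_div_add_atTop_nhds_zero_nat
    rw [add_zero] at hup
    exact tendsto_of_tendsto_of_tendsto_of_le_of_le tendsto_const_nhds hup
      (fun n => hm_lb _ (hz n)) (fun n => (hJzlt n).le)
  obtain ⟨φ₀, hφ₀, g₀, w₀, hCw₀, hJw₀, hconv₀⟩ :=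
    hylo_key G E C hEc hCc hEG hCG hE0 hC0 hEs hCs hEpos hEcoer hEzero δ m hδpos
      hm_lb hm_lt z hz hJz
  have hw₀ne : w₀ ≠ 0 := fun h => hCw₀ (by rw [h, hC0])
  set eδ : ℝ := E w₀ with heδdef
  set cδ : ℝ := |C w₀| with hcδdef
  have heδpos : 0 < eδ := hEpos w₀ hw₀ne
  have hcδpos : 0 < cδ := abs_pos.2 hCw₀
  have hmΓ : m = eδ / cδ + δ * eδ := by
    have h1 : Jfun E C δ w₀ = E w₀ / |C w₀| + δ * E w₀ := rfl
    rw [← hJw₀, h1]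
  have hJΓ : ∀ u : X, E u = eδ → |C u| = cδ → Jfun E C δ u = m := by
    intro u h1 h2
    have h3 : Jfun E C δ u = E u / |C u| + δ * E u := rfl
    rw [h3, h1, h2, hmΓ]
  have hCΓne : ∀ u : X, |C u| = cδ → C u ≠ 0 := by
    intro u h2 h
    rw [h, abs_zero] at h2
    exact hcδpos.ne' h2.symm
  -- G-compactness of sequences in Γ
  have hGcomp : ∀ u : ℕ → X, (∀ n, E (u n) = eδ ∧ |C (u n)| = cδ) →
      ∃ φ : ℕ → ℕ, StrictMono φ ∧ ∃ g : ℕ → G, ∃ w : X, C w ≠ 0 ∧ E w = eδ ∧ |C w| = cδ ∧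
        Tendsto (fun k => (g k : X ≃ₗᵢ[ℝ] X) (u (φ k))) atTop (𝓝 w) := by
    intro u hu
    have hCu : ∀ n, C (u n) ≠ 0 := fun n => hCΓne _ (hu n).2
    have hJu : Tendsto (fun n => Jfun E C δ (u n)) atTop (𝓝 m) := by
      have h1 : (fun n => Jfun E C δ (u n)) = fun _ => m :=
        funext fun n => hJΓ _ (hu n).1 (hu n).2
      rw [h1]
      exact tendsto_const_nhds
    obtain ⟨φ, hφ, g, w, hCw, hJw, hconv⟩ :=
      hylo_key G E C hEc hCc hEG hCG hE0 hC0 hEs hCs hEpos hEcoer hEzero δ m hδpos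
        hm_lb hm_lt u hCu hJu
    have hE1 : Tendsto (fun k => E ((g k : X ≃ₗᵢ[ℝ] X) (u (φ k)))) atTop (𝓝 (E w)) :=
      (hEc.tendsto w).comp hconv
    have hE2 : (fun k => E ((g k : X ≃ₗᵢ[ℝ] X) (u (φ k)))) = fun _ => eδ :=
      funext fun k => by rw [hEG]; exact (hu (φ k)).1
    have hEweq : E w = eδ := by
      rw [hE2] at hE1
      exact tendsto_nhds_unique hE1 tendsto_const_nhds
    have hC1 : Tendsto (fun k => |C ((g k : X ≃ₗᵢ[ℝ] X) (u (φ k)))|) atTop (𝓝 |C w|) :=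
      ((hCc.tendsto w).comp hconv).abs
    have hC2 : (fun k => |C ((g k : X ≃ₗᵢ[ℝ] X) (u (φ k)))|) = fun _ => cδ :=
      funext fun k => by rw [hCG]; exact (hu (φ k)).2
    have hCweq : |C w| = cδ := by
      rw [hC2] at hC1
      exact tendsto_nhds_unique hC1 tendsto_const_nhds
    exact ⟨φ, hφ, g, w, hCw, hEweq, hCweq, hconv⟩
  refine ⟨eδ, cδ, heδpos, hcδpos, {u : X | E u = eδ ∧ |C u| = cδ}, rfl,
    ⟨w₀, rfl, rfl⟩, ?_, ?_, ?_, ?_, ?_⟩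
  · rintro ⟨h1, -⟩
    rw [hE0] at h1
    exact heδpos.ne' h1.symm
  · rintro u ⟨h1, h2⟩ t
    exact ⟨by rw [hγE t u]; exact h1, by rw [hγC t u]; exact h2⟩
  · intro u hu
    obtain ⟨φ, hφ, g, w, -, -, -, hconv⟩ := hGcomp u (fun n => hu n)
    exact ⟨φ, hφ, g, w, hconv⟩
  · rintro u ⟨h1, -⟩ vv hvv
    have hCvv : C vv ≠ 0 := hCΓne _ hvv
    have h3 := hm_lb vv hCvv
    have h4 : Jfun E C δ vv = E vv / cδ + δ * E vv := by
      have h5 : Jfun E C δ vv = E vv / |C vv| + δ * E vv := rfl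
      rw [h5, hvv]
    rw [h1]
    by_contra hlt
    push_neg at hlt
    rw [h4] at h3
    have h6 : E vv / cδ < eδ / cδ := by gcongr
    have h7 : δ * eδ - δ * E vv = δ * (eδ - E vv) := by ring
    linarith [mul_pos hδpos (sub_pos.2 hlt), hmΓ]
  · intro ε hε
    by_contra hc
    push_neg at hc
    have hc' : ∀ n : ℕ, ∃ u : X,
        Metric.infDist u {u : X | E u = eδ ∧ |C u| = cδ} ≤ 1 / ((n : ℝ) + 1) ∧
        ∃ t : ℝ, 0 ≤ t ∧ ε < Metric.infDist (γ t u) {u : X | E u = eδ ∧ |C u| = cδ} := by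
      intro n
      obtain ⟨u, hu, t, ht, hgt⟩ := hc (1 / ((n : ℝ) + 1)) (by positivity)
      exact ⟨u, hu, t, ht, hgt⟩
    choose u hu t ht hgt using hc'
    have hΓne : Set.Nonempty {u : X | E u = eδ ∧ |C u| = cδ} := ⟨w₀, rfl, rfl⟩
    have hp : ∀ n : ℕ, ∃ p : X, (E p = eδ ∧ |C p| = cδ) ∧ dist (u n) p < 2 / ((n : ℝ) + 1) := by
      intro n
      have h1 : Metric.infDist (u n) {u : X | E u = eδ ∧ |C u| = cδ} < 2 / ((n : ℝ) + 1) :=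
        lt_of_le_of_lt (hu n) (by gcongr; norm_num)
      obtain ⟨p, hp1, hp2⟩ := (Metric.infDist_lt_iff hΓne).1 h1
      exact ⟨p, hp1, hp2⟩
    choose p hpΓ hpd using hp
    -- E (u n) → eδ and |C (u n)| → cδ
    have hpair : Tendsto (fun n => (E (u n), |C (u n)|)) atTop (𝓝 (eδ, cδ)) := by
      apply tendsto_of_subseq_tendsto
      intro ns hns
      obtain ⟨φ, hφ, g, w, -, hEw, hCw, hconv⟩ := hGcomp (fun k => p (ns k)) (fun k => hpΓ (ns k))
      refine ⟨φ, ?_⟩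
      have hd0 : Tendsto (fun k => dist ((g k : X ≃ₗᵢ[ℝ] X) (u (ns (φ k)))) w) atTop (𝓝 0) := by
        have hb : ∀ k, dist ((g k : X ≃ₗᵢ[ℝ] X) (u (ns (φ k)))) w ≤
            2 / ((ns (φ k) : ℝ) + 1) + dist ((g k : X ≃ₗᵢ[ℝ] X) (p (ns (φ k)))) w := by
          intro k
          have h1 := dist_triangle ((g k : X ≃ₗᵢ[ℝ] X) (u (ns (φ k))))
            ((g k : X ≃ₗᵢ[ℝ] X) (p (ns (φ k)))) w
          have h2 : dist ((g k : X ≃ₗᵢ[ℝ] X) (u (ns (φ k))))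
              ((g k : X ≃ₗᵢ[ℝ] X) (p (ns (φ k)))) = dist (u (ns (φ k))) (p (ns (φ k))) :=
            (g k : X ≃ₗᵢ[ℝ] X).dist_map _ _
          have h3 := hpd (ns (φ k))
          linarith
        have hten : Tendsto (fun k => 2 / ((ns (φ k) : ℝ) + 1) +
            dist ((g k : X ≃ₗᵢ[ℝ] X) (p (ns (φ k)))) w) atTop (𝓝 (0 + 0)) := by
          apply Tendsto.add
          · have h4 : Tendsto (fun k => 1 / ((ns (φ k) : ℝ) + 1)) atTop (𝓝 0) :=
              tendsto_one_div_add_atTop_nhds_zero_nat.comp (hns.comp hφ.tendsto_atTop)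
            have h5 := h4.const_mul 2
            rw [mul_zero] at h5
            have h6 : (fun k => 2 / ((ns (φ k) : ℝ) + 1)) =
                fun k => 2 * (1 / ((ns (φ k) : ℝ) + 1)) := by
              funext k; rw [mul_one_div]
            rw [h6]
            exact h5
          · exact tendsto_iff_dist_tendsto_zero.1 hconv
        rw [add_zero] at hten
        exact squeeze_zero (fun k => dist_nonneg) hb hten
      have hconv2 : Tendsto (fun k => (g k : X ≃ₗᵢ[ℝ] X) (u (ns (φ k)))) atTop (𝓝 w) :=
        tendsto_iff_dist_tendsto_zero.2 hd0
      have hE1 : Tendsto (fun k => E (u (ns (φ k)))) atTop (𝓝 eδ) := by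
        have h1 : Tendsto (fun k => E ((g k : X ≃ₗᵢ[ℝ] X) (u (ns (φ k))))) atTop (𝓝 (E w)) :=
          (hEc.tendsto w).comp hconv2
        rw [hEw] at h1
        have h2 : (fun k => E ((g k : X ≃ₗᵢ[ℝ] X) (u (ns (φ k))))) =
            fun k => E (u (ns (φ k))) := funext fun k => hEG _ _
        rwa [h2] at h1
      have hC1 : Tendsto (fun k => |C (u (ns (φ k)))|) atTop (𝓝 cδ) := by
        have h1 : Tendsto (fun k => |C ((g k : X ≃ₗᵢ[ℝ] X) (u (ns (φ k))))|) atTop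
            (𝓝 |C w|) := ((hCc.tendsto w).comp hconv2).abs
        rw [hCw] at h1
        have h2 : (fun k => |C ((g k : X ≃ₗᵢ[ℝ] X) (u (ns (φ k))))|) =
            fun k => |C (u (ns (φ k)))| := funext fun k => by rw [hCG]
        rwa [h2] at h1
      exact hE1.prodMk_nhds hC1
    have hEu : Tendsto (fun n => E (u n)) atTop (𝓝 eδ) :=
      (continuousAt_fst.tendsto).comp hpair
    have hCu : Tendsto (fun n => |C (u n)|) atTop (𝓝 cδ) :=
      (continuousAt_snd.tendsto).comp hpair
    -- the evolved sequence
    have hEz : Tendsto (fun n => E (γ (t n) (u n))) atTop (𝓝 eδ) := by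
      have h1 : (fun n => E (γ (t n) (u n))) = fun n => E (u n) :=
        funext fun n => hγE _ _
      rw [h1]; exact hEu
    have hCz : Tendsto (fun n => |C (γ (t n) (u n))|) atTop (𝓝 cδ) := by
      have h1 : (fun n => |C (γ (t n) (u n))|) = fun n => |C (u n)| :=
        funext fun n => by rw [hγC]
      rw [h1]; exact hCu
    have hCznz : ∀ᶠ n in atTop, C (γ (t n) (u n)) ≠ 0 :=
      (hCz.eventually (eventually_gt_nhds (half_lt_self hcδpos))).mono fun n hn =>
        abs_pos.1 (lt_trans (by positivity) hn)
    obtain ⟨N₀, hN₀⟩ := eventually_atTop.1 hCznz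
    have hJZ : Tendsto (fun k => Jfun E C δ (γ (t (k + N₀)) (u (k + N₀)))) atTop (𝓝 m) := by
      have h1 : (fun k => Jfun E C δ (γ (t (k + N₀)) (u (k + N₀)))) =
          fun k => E (γ (t (k + N₀)) (u (k + N₀))) / |C (γ (t (k + N₀)) (u (k + N₀)))| +
            δ * E (γ (t (k + N₀)) (u (k + N₀))) := rfl
      rw [h1, hmΓ]
      exact ((hEz.comp (tendsto_add_atTop_nat N₀)).div
        (hCz.comp (tendsto_add_atTop_nat N₀)) hcδpos.ne').add
        ((hEz.comp (tendsto_add_atTop_nat N₀)).const_mul δ)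
    obtain ⟨φ, hφ, g, w', hCw', hJw', hconv'⟩ :=
      hylo_key G E C hEc hCc hEG hCG hE0 hC0 hEs hCs hEpos hEcoer hEzero δ m hδpos
        hm_lb hm_lt (fun k => γ (t (k + N₀)) (u (k + N₀))) (fun k => hN₀ (k + N₀)
          (Nat.le_add_left N₀ k)) hJZ
    -- w' ∈ Γ
    have hEw' : E w' = eδ := by
      have h1 : Tendsto (fun k => E ((g k : X ≃ₗᵢ[ℝ] X)
          (γ (t (φ k + N₀)) (u (φ k + N₀))))) atTop (𝓝 (E w')) := (hEc.tendsto w').comp hconv'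
      have h2 : (fun k => E ((g k : X ≃ₗᵢ[ℝ] X) (γ (t (φ k + N₀)) (u (φ k + N₀))))) =
          fun k => E (γ (t (φ k + N₀)) (u (φ k + N₀))) := funext fun k => hEG _ _
      rw [h2] at h1
      exact tendsto_nhds_unique h1 ((hEz.comp (tendsto_add_atTop_nat N₀)).comp
        hφ.tendsto_atTop)
    have hCw'2 : |C w'| = cδ := by
      have h1 : Tendsto (fun k => |C ((g k : X ≃ₗᵢ[ℝ] X)
          (γ (t (φ k + N₀)) (u (φ k + N₀))))|) atTop (𝓝 |C w'|) :=
        ((hCc.tendsto w').comp hconv').abs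
      have h2 : (fun k => |C ((g k : X ≃ₗᵢ[ℝ] X) (γ (t (φ k + N₀)) (u (φ k + N₀))))|) =
          fun k => |C (γ (t (φ k + N₀)) (u (φ k + N₀)))| := funext fun k => by rw [hCG]
      rw [h2] at h1
      exact tendsto_nhds_unique h1 ((hCz.comp (tendsto_add_atTop_nat N₀)).comp
        hφ.tendsto_atTop)
    -- contradiction with hgt
    have hev : ∀ᶠ k in atTop, dist ((g k : X ≃ₗᵢ[ℝ] X)
        (γ (t (φ k + N₀)) (u (φ k + N₀)))) w' < ε := by
      have h1 := Metric.tendsto_atTop.1 hconv' ε hε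
      obtain ⟨N, hN⟩ := h1
      exact eventually_atTop.2 ⟨N, fun k hk => hN k hk⟩
    obtain ⟨k, hk⟩ := hev.exists
    have hmem : ((g k)⁻¹ : X ≃ₗᵢ[ℝ] X) w' ∈ {u : X | E u = eδ ∧ |C u| = cδ} := by
      constructor
      · rw [show ((g k)⁻¹ : X ≃ₗᵢ[ℝ] X) = (((g k)⁻¹ : G) : X ≃ₗᵢ[ℝ] X) by rfl]
        rw [hEG ((g k)⁻¹) w']
        exact hEw'
      · rw [show ((g k)⁻¹ : X ≃ₗᵢ[ℝ] X) = (((g k)⁻¹ : G) : X ≃ₗᵢ[ℝ] X) by rfl]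
        rw [hCG ((g k)⁻¹) w']
        exact hCw'2
    have hdist : dist (γ (t (φ k + N₀)) (u (φ k + N₀))) (((g k)⁻¹ : X ≃ₗᵢ[ℝ] X) w') < ε := by
      have h1 : dist ((g k : X ≃ₗᵢ[ℝ] X) (γ (t (φ k + N₀)) (u (φ k + N₀))))
          ((g k : X ≃ₗᵢ[ℝ] X) (((g k)⁻¹ : X ≃ₗᵢ[ℝ] X) w')) =
          dist (γ (t (φ k + N₀)) (u (φ k + N₀))) (((g k)⁻¹ : X ≃ₗᵢ[ℝ] X) w') :=
        (g k : X ≃ₗᵢ[ℝ] X).dist_map _ _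
      have h2 : (g k : X ≃ₗᵢ[ℝ] X) (((g k)⁻¹ : X ≃ₗᵢ[ℝ] X) w') = w' := by
        rw [show ((g k)⁻¹ : X ≃ₗᵢ[ℝ] X) = ((g k : X ≃ₗᵢ[ℝ] X))⁻¹ by
          rw [← Subgroup.coe_inv]]
        rw [LinearIsometryEquiv.coe_inv]
        exact (g k : X ≃ₗᵢ[ℝ] X).apply_symm_apply w'
      rw [← h1, h2]
      exact hk
    have hle : Metric.infDist (γ (t (φ k + N₀)) (u (φ k + N₀)))
        {u : X | E u = eδ ∧ |C u| = cδ} ≤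
        dist (γ (t (φ k + N₀)) (u (φ k + N₀))) (((g k)⁻¹ : X ≃ₗᵢ[ℝ] X) w') :=
      Metric.infDist_le_dist_of_mem hmem
    have := hgt (φ k + N₀)
    linarith
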